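/- Let n ≥ 5, let M be a matching of the hypercube Q_n, and let u be a vertex of Q_n. Assume Conjecture B holds for dimension n. Then |T^M_u| ≥ 2^{n-2}. Moreover, |T^M_u| = 2^{n-2} if and only if M contains a half-layer H covering u, in which case T^M_u is exactly the set of vertices of parity opposite to u that are not covered by H; otherwise |T^M_u| ≥ 2^{n-1} − 2. -/

import Mathlib

open SimpleGraph

/-- The hypercube graph `Q_n` on binary strings of length `n`:
two strings are adjacent iff they differ in exactly one coordinate. -/
def Qc (n : ℕ) : SimpleGraph (Fin n → Bool) where
  Adj u v := (Finset.univ.filter fun i => u i ≠ v i).card = 1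
  symm := by
    constructor
    intro u v h
    beta_reduce at h ⊢
    have hset : (Finset.univ.filter fun i => v i ≠ u i)
        = (Finset.univ.filter fun i => u i ≠ v i) :=
      Finset.filter_congr (fun i _ => by simp [ne_comm])
    rw [hset]; exact h
  loopless := by
    constructor
    intro u h
    simp at h

/-- The parity (weight mod 2) of a vertex of the hypercube. -/
def wt {n : ℕ} (u : Fin n → Bool) : ZMod 2 :=
  ((Finset.univ.filter fun i => u i = true).card : ZMod 2)

/-- The neighbor of `u` obtained by flipping coordinate `i`. -/
def flipCoord {n : ℕ} (u : Fin n → Bool) (i : Fin n) : Fin n → Bool :=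
  Function.update u i (!u i)

/-- `M` is a matching of the graph `G`: a set of pairwise non-incident edges of `G`. -/
def IsMatchingOn {V : Type*} (G : SimpleGraph V) (M : Set (Sym2 V)) : Prop :=
  M ⊆ G.edgeSet ∧ ∀ e ∈ M, ∀ f ∈ M, e ≠ f → ∀ v : V, v ∈ e → v ∉ f

/-- A vertex is covered by a set of edges if it is an endpoint of one of them. -/
def coveredBy {V : Type*} (M : Set (Sym2 V)) (v : V) : Prop :=
  ∃ e ∈ M, v ∈ e

/-- There is a Hamilton path of `G` between `u` and `v` whose edge set contains `M`. -/
def ExtendsHamPath {V : Type*} [DecidableEq V] (G : SimpleGraph V) (M : Set (Sym2 V)) (u v : V) : Prop :=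
  ∃ p : G.Walk u v, p.IsHamiltonian ∧ ∀ e ∈ M, e ∈ p.edges

/-- There is a Hamilton cycle of `G` whose edge set contains `M`. -/
def ExtendsHamCycle {V : Type*} [DecidableEq V] (G : SimpleGraph V) (M : Set (Sym2 V)) : Prop :=
  ∃ (a : V) (c : G.Walk a a), c.IsHamiltonianCycle ∧ ∀ e ∈ M, e ∈ c.edges

/-- The set of directions (coordinates where the endpoints differ) of an edge. -/
def edgeDirs {n : ℕ} (e : Sym2 (Fin n → Bool)) : Finset (Fin n) :=
  Sym2.lift ⟨fun u v => Finset.univ.filter fun i => u i ≠ v i, fun u v =>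
    Finset.filter_congr (fun i _ => by simp [ne_comm])⟩ e

/-- The edges of `M` lie in at most `d` distinct directions. -/
def SpansAtMost {n : ℕ} (M : Set (Sym2 (Fin n → Bool))) (d : ℕ) : Prop :=
  ∃ D : Finset (Fin n), D.card ≤ d ∧ ∀ e ∈ M, edgeDirs e ⊆ D

/-- The half-layer in direction `i` of parity `p`: all edges of `Q_n` in direction `i`
whose base (the endpoint with `i`-th coordinate `false`) has parity `p`. -/
def halfLayer (n : ℕ) (i : Fin n) (p : ZMod 2) : Set (Sym2 (Fin n → Bool)) :=
  {e | ∃ u : Fin n → Bool, u i = false ∧ wt u = p ∧ e = s(u, flipCoord u i)}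

/-- Condition C1: `M` contains a half-layer covering both `u` and `v`. -/
def CondC1 {n : ℕ} (M : Set (Sym2 (Fin n → Bool))) (u v : Fin n → Bool) : Prop :=
  ∃ (i : Fin n) (p : ZMod 2), halfLayer n i p ⊆ M ∧
    coveredBy (halfLayer n i p) u ∧ coveredBy (halfLayer n i p) v

/-- Condition C2: `v = u^i`, `M` contains a `u`-avoiding almost half-layer in direction `i`,
and there is `j ≠ i` with `u u^j ∈ M` and `v v^j ∈ M`. -/
def CondC2 {n : ℕ} (M : Set (Sym2 (Fin n → Bool))) (u v : Fin n → Bool) : Prop :=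
  ∃ i : Fin n, v = flipCoord u i ∧
    (∃ (p : ZMod 2) (e₀ : Sym2 (Fin n → Bool)), e₀ ∈ halfLayer n i p ∧ u ∈ e₀ ∧
      halfLayer n i p \ {e₀} ⊆ M) ∧
    ∃ j : Fin n, j ≠ i ∧ s(u, flipCoord u j) ∈ M ∧ s(v, flipCoord v j) ∈ M

/-- Condition C3: `uv ∈ M`. -/
def CondC3 {n : ℕ} (M : Set (Sym2 (Fin n → Bool))) (u v : Fin n → Bool) : Prop :=
  s(u, v) ∈ M

/-- None of the C-conditions holds for `M`, `u`, `v`. -/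
def NoneC {n : ℕ} (M : Set (Sym2 (Fin n → Bool))) (u v : Fin n → Bool) : Prop :=
  ¬ CondC1 M u v ∧ ¬ CondC2 M u v ∧ ¬ CondC3 M u v

/-- Conjecture A for dimension `d`: for every matching `M` of `Q_d` and vertices `u`, `v`
of opposite parity with `u` not covered by `M`, there is a Hamilton path between `u` and `v`
extending `M`. -/
def ConjA (d : ℕ) : Prop :=
  ∀ M : Set (Sym2 (Fin d → Bool)), IsMatchingOn (Qc d) M →
    ∀ u v : Fin d → Bool, wt u ≠ wt v → ¬ coveredBy M u →
      ExtendsHamPath (Qc d) M u v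

/-- Conjecture B for dimension `d`: for every matching `M` of `Q_d` and vertices `u`, `v`
of opposite parity, a Hamilton path between `u` and `v` extending `M` exists iff none of
the C-conditions holds. -/
def ConjB (d : ℕ) : Prop :=
  ∀ M : Set (Sym2 (Fin d → Bool)), IsMatchingOn (Qc d) M →
    ∀ u v : Fin d → Bool, wt u ≠ wt v →
      (ExtendsHamPath (Qc d) M u v ↔ NoneC M u v)

/-- There exist at least two distinct Hamilton paths of `G` between `u` and `v`
extending `M`. -/
def TwoHamPaths {V : Type*} [DecidableEq V] (G : SimpleGraph V) (M : Set (Sym2 V)) (u v : V) : Prop :=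
  ∃ p₁ p₂ : G.Walk u v, p₁.IsHamiltonian ∧ (∀ e ∈ M, e ∈ p₁.edges) ∧
    p₂.IsHamiltonian ∧ (∀ e ∈ M, e ∈ p₂.edges) ∧ p₁ ≠ p₂

/-- Conjecture C for dimension `d`: none of the C-conditions holds iff there exist two
distinct Hamilton paths between `u` and `v` extending `M`. -/
def ConjC (d : ℕ) : Prop :=
  ∀ M : Set (Sym2 (Fin d → Bool)), IsMatchingOn (Qc d) M →
    ∀ u v : Fin d → Bool, wt u ≠ wt v →
      (NoneC M u v ↔ TwoHamPaths (Qc d) M u v)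

/-- The copy of a set of edges of `Q_d` inside the `i`-th canonical copy of `Q_d`
in `P_m □ Q_d`. -/
def liftEdges {m d : ℕ} (i : Fin m) (M : Set (Sym2 (Fin d → Bool))) :
    Set (Sym2 (Fin m × (Fin d → Bool))) :=
  (Sym2.map fun x => (i, x)) '' M

/-- The global parity of a vertex of `P_m □ Q_d`. -/
def gwt {m d : ℕ} (v : Fin m × (Fin d → Bool)) : ZMod 2 :=
  (v.1.val : ZMod 2) + wt v.2

/-- The sequence of half-layers of `P_m □ Q_d` in direction `k` of global parity `p`:
all edges of the canonical copies lying in direction `k` whose base has global parity `p`. -/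
def seqHalfLayer (m d : ℕ) (k : Fin d) (p : ZMod 2) :
    Set (Sym2 (Fin m × (Fin d → Bool))) :=
  {e | ∃ (i : Fin m) (x : Fin d → Bool), x k = false ∧ gwt (i, x) = p ∧
    e = s((i, x), (i, flipCoord x k))}

/-- `M` is a maximal matching of `G`. -/
def IsMaximalMatchingOn {V : Type*} (G : SimpleGraph V) (M : Set (Sym2 V)) : Prop :=
  IsMatchingOn G M ∧ ∀ e : Sym2 V, IsMatchingOn G (insert e M) → e ∈ M

/-- The set `(M \ {uu^M, vv^M}) ∪ {u^M v^M}`, where the removed edges are those of `M`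
incident to `u` or `v`, and the edge `u^M v^M` is present exactly when both `u` and `v`
are covered by `M`. -/
def reducedM {n : ℕ} (M : Set (Sym2 (Fin n → Bool))) (u v : Fin n → Bool) :
    Set (Sym2 (Fin n → Bool)) :=
  {e | e ∈ M ∧ u ∉ e ∧ v ∉ e} ∪
    {f | ∃ a b : Fin n → Bool, s(u, a) ∈ M ∧ s(v, b) ∈ M ∧ f = s(a, b)}

/-- The complete bipartite graph `B(Q_n)` on the vertices of `Q_n`: two vertices are
adjacent iff they have opposite parity. -/
def Bgraph (n : ℕ) : SimpleGraph (Fin n → Bool) where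
  Adj u v := wt u ≠ wt v
  symm := ⟨fun _ _ h => h.symm⟩
  loopless := ⟨fun _ h => h rfl⟩

lemma flip_apply {n : ℕ} (u : Fin n → Bool) (i j : Fin n) :
    flipCoord u i j = if j = i then !u i else u j := by
  simp [flipCoord, Function.update]

@[simp] lemma flip_same {n : ℕ} (u : Fin n → Bool) (i : Fin n) :
    flipCoord u i i = !u i := by simp [flip_apply]

lemma flip_other {n : ℕ} (u : Fin n → Bool) {i j : Fin n} (h : j ≠ i) :
    flipCoord u i j = u j := by simp [flip_apply, h]

lemma flip_ne {n : ℕ} (u : Fin n → Bool) (i : Fin n) : flipCoord u i ≠ u := by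
  intro h
  have := congrFun h i
  simp at this

@[simp] lemma flipCoord_flip_flip {n : ℕ} (u : Fin n → Bool) (i : Fin n) :
    flipCoord (flipCoord u i) i = u := by
  funext j
  by_cases h : j = i
  · subst h; simp
  · rw [flip_other _ h, flip_other _ h]

lemma wt_flip_false {n : ℕ} (u : Fin n → Bool) (i : Fin n) (h : u i = false) :
    wt (flipCoord u i) = wt u + 1 := by
  unfold wt
  have hins : (Finset.univ.filter fun j => flipCoord u i j = true)
      = insert i (Finset.univ.filter fun j => u j = true) := by
    ext j
    by_cases hj : j = i
    · subst hj
      simp [h]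
    · simp [flip_other _ hj, hj]
  rw [hins, Finset.card_insert_of_notMem (by simp [h])]
  push_cast
  ring

lemma wt_flip {n : ℕ} (u : Fin n → Bool) (i : Fin n) :
    wt (flipCoord u i) = wt u + 1 := by
  rcases Bool.eq_false_or_eq_true (u i) with h | h
  · have h2 : (flipCoord u i) i = false := by simp [h]
    have h3 := wt_flip_false (flipCoord u i) i h2
    rw [flipCoord_flip_flip] at h3
    have key : ∀ a b : ZMod 2, a = b + 1 → b = a + 1 := by decide
    exact key _ _ h3
  · exact wt_flip_false u i h

lemma adj_flip {n : ℕ} {u v : Fin n → Bool} (h : (Qc n).Adj u v) :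
    ∃ i, v = flipCoord u i := by
  obtain ⟨i, hi⟩ := Finset.card_eq_one.mp h
  refine ⟨i, funext fun j => ?_⟩
  by_cases hj : j = i
  · subst hj
    have : u j ≠ v j := by
      have : j ∈ Finset.univ.filter fun k => u k ≠ v k := by rw [hi]; simp
      simpa using this
    rw [flip_same]
    revert this; cases u j <;> cases v j <;> simp
  · have : j ∉ Finset.univ.filter fun k => u k ≠ v k := by rw [hi]; simp [hj]
    simp at this
    rw [flip_other _ hj, this]

lemma walk_wt {n : ℕ} {u v : Fin n → Bool} (p : (Qc n).Walk u v) :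
    wt v = wt u + p.length := by
  induction p with
  | nil => simp
  | cons h q ih =>
    obtain ⟨i, hi⟩ := adj_flip h
    rw [ih]
    subst hi
    rw [wt_flip]
    simp [SimpleGraph.Walk.length_cons]
    push_cast
    ring

lemma card_filter_flip {n : ℕ} (k : Fin n) (P Q : (Fin n → Bool) → Prop)
    [DecidablePred P] [DecidablePred Q]
    (h : ∀ v, P v → Q (flipCoord v k)) (h' : ∀ v, Q v → P (flipCoord v k)) :
    (Finset.univ.filter fun v => P v).card = (Finset.univ.filter fun v => Q v).card := by
  apply Finset.card_bij' (fun a _ => flipCoord a k) (fun a _ => flipCoord a k)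
  · intro a ha
    simp only [Finset.mem_filter, Finset.mem_univ, true_and] at ha ⊢
    exact h a ha
  · intro a ha
    simp only [Finset.mem_filter, Finset.mem_univ, true_and] at ha ⊢
    exact h' a ha
  · intro a _; exact flipCoord_flip_flip a k
  · intro a _; exact flipCoord_flip_flip a k

lemma card_univ_cube {n : ℕ} : (Finset.univ : Finset (Fin n → Bool)).card = 2 ^ n := by
  simp [Finset.card_univ]

lemma filter_split {n : ℕ} (P Q : (Fin n → Bool) → Prop) [DecidablePred P] [DecidablePred Q]
    (h : ∀ v, P v ↔ ¬ Q v) :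
    (Finset.univ.filter P).card + (Finset.univ.filter Q).card = 2 ^ n := by
  rw [← card_univ_cube (n := n)]
  have : (Finset.univ.filter P) = (Finset.univ.filter fun v => ¬ Q v) :=
    Finset.filter_congr fun v _ => by simp [h v]
  rw [this, add_comm]
  exact Finset.card_filter_add_card_filter_not _

lemma zmod2_ne : ∀ a q : ZMod 2, a ≠ q ↔ a = q + 1 := by decide

lemma zmod2_add : ∀ q : ZMod 2, q + 1 + 1 = q := by decide

lemma card_coord {n : ℕ} (hn : 1 ≤ n) (i : Fin n) (c : Bool) :
    (Finset.univ.filter fun v : Fin n → Bool => v i = c).card = 2 ^ (n - 1) := by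
  have hb : (Finset.univ.filter fun v : Fin n → Bool => v i = c).card
      = (Finset.univ.filter fun v : Fin n → Bool => v i = !c).card := by
    apply card_filter_flip i
    · intro v hv; simp [hv]
    · intro v hv; simp [hv]
  have hiff : ∀ b c : Bool, b = c ↔ ¬ (b = !c) := by decide
  have hs := filter_split (fun v : Fin n → Bool => v i = c) (fun v => v i = !c)
    (fun v => hiff (v i) c)
  have h2 : 2 ^ n = 2 * 2 ^ (n - 1) := by
    rw [← pow_succ']
    congr 1
    exact (Nat.sub_add_cancel hn).symm
  rw [← hb, h2, ← two_mul] at hs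
  exact Nat.eq_of_mul_eq_mul_left two_pos hs

lemma card_parity {n : ℕ} (hn : 1 ≤ n) (q : ZMod 2) :
    (Finset.univ.filter fun v : Fin n → Bool => wt v = q).card = 2 ^ (n - 1) := by
  have hk : 0 < n := by omega
  have hb : (Finset.univ.filter fun v : Fin n → Bool => wt v = q).card
      = (Finset.univ.filter fun v : Fin n → Bool => wt v = q + 1).card := by
    apply card_filter_flip ⟨0, hk⟩
    · intro v hv; rw [wt_flip, hv]
    · intro v hv; rw [wt_flip, hv, zmod2_add]
  have hiff : ∀ a q : ZMod 2, a = q ↔ ¬ (a = q + 1) := by decide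
  have hs := filter_split (fun v : Fin n → Bool => wt v = q) (fun v => wt v = q + 1)
    (fun v => hiff (wt v) q)
  have h2 : 2 ^ n = 2 * 2 ^ (n - 1) := by
    rw [← pow_succ']
    congr 1
    exact (Nat.sub_add_cancel hn).symm
  rw [← hb, h2, ← two_mul] at hs
  exact Nat.eq_of_mul_eq_mul_left two_pos hs

lemma card_coord_parity {n : ℕ} (hn : 2 ≤ n) (i : Fin n) (c : Bool) (q : ZMod 2) :
    (Finset.univ.filter fun v : Fin n → Bool => v i = c ∧ wt v = q).card = 2 ^ (n - 2) := by
  obtain ⟨k, hk⟩ : ∃ k : Fin n, k ≠ i := by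
    have : 1 < Fintype.card (Fin n) := by simp; omega
    exact Fintype.exists_ne_of_one_lt_card this i
  have hb : (Finset.univ.filter fun v : Fin n → Bool => v i = c ∧ wt v = q).card
      = (Finset.univ.filter fun v : Fin n → Bool => v i = c ∧ wt v = q + 1).card := by
    apply card_filter_flip k
    · intro v hv
      exact ⟨by rw [flip_other _ (Ne.symm hk)]; exact hv.1, by rw [wt_flip, hv.2]⟩
    · intro v hv
      exact ⟨by rw [flip_other _ (Ne.symm hk)]; exact hv.1, by rw [wt_flip, hv.2, zmod2_add]⟩
  have hiff : ∀ (c : Bool) (q : ZMod 2), ∀ (b : Bool) (a : ZMod 2),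
      (b = c ∧ a = q) ↔ ¬ (b ≠ c ∨ (b = c ∧ a = q + 1)) := by decide
  have hs := filter_split (fun v : Fin n → Bool => v i = c ∧ wt v = q)
    (fun v => v i ≠ c ∨ (v i = c ∧ wt v = q + 1)) (fun v => hiff c q (v i) (wt v))
  have hdisj : Disjoint (Finset.univ.filter fun v : Fin n → Bool => v i ≠ c)
      (Finset.univ.filter fun v : Fin n → Bool => v i = c ∧ wt v = q + 1) := by
    rw [Finset.disjoint_filter]
    intro v _ hv hc
    exact hv hc.1
  have hsplit2 : (Finset.univ.filter fun v : Fin n → Bool =>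
        v i ≠ c ∨ (v i = c ∧ wt v = q + 1)).card
      = (Finset.univ.filter fun v : Fin n → Bool => v i ≠ c).card
      + (Finset.univ.filter fun v : Fin n → Bool => v i = c ∧ wt v = q + 1).card := by
    rw [Finset.filter_or, Finset.card_union_of_disjoint hdisj]
  have hnc : (Finset.univ.filter fun v : Fin n → Bool => v i ≠ c).card = 2 ^ (n - 1) := by
    have he : (Finset.univ.filter fun v : Fin n → Bool => v i ≠ c)
        = (Finset.univ.filter fun v : Fin n → Bool => v i = !c) := by
      apply Finset.filter_congr
      intro v _
      cases c <;> cases hv : v i <;> simp [hv]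
    rw [he]
    exact card_coord (le_trans (by norm_num) hn) i (!c)
  obtain ⟨m, rfl⟩ : ∃ m, n = m + 2 := ⟨n - 2, (Nat.sub_add_cancel hn).symm⟩
  have h2 : 2 ^ (m + 2) = 2 ^ (m + 2 - 1) + 2 * 2 ^ (m + 2 - 2) := by
    simp only [Nat.add_sub_cancel]
    show 2 ^ (m + 2) = 2 ^ (m + 1) + 2 * 2 ^ m
    ring
  rw [hsplit2, hnc, ← hb, h2] at hs
  set X := (Finset.univ.filter fun v : Fin (m + 2) → Bool => v i = c ∧ wt v = q).card with hX
  have h3 : 2 ^ (m + 2 - 1) + (X + X) = 2 ^ (m + 2 - 1) + 2 * 2 ^ (m + 2 - 2) := by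
    rw [← hs]; ring
  have h4 := Nat.add_left_cancel h3
  rw [← two_mul] at h4
  exact Nat.eq_of_mul_eq_mul_left two_pos h4

def bval (b : Bool) : ZMod 2 := if b then 1 else 0

lemma matching_unique {V : Type*} {G : SimpleGraph V} {M : Set (Sym2 V)}
    (hM : IsMatchingOn G M) {e f : Sym2 V} (he : e ∈ M) (hf : f ∈ M) {w : V}
    (hwe : w ∈ e) (hwf : w ∈ f) : e = f := by
  by_contra hne
  exact hM.2 e he f hf hne w hwe hwf

lemma edge_mem_halfLayer {n : ℕ} {i : Fin n} {p : ZMod 2} {e : Sym2 (Fin n → Bool)}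
    {w : Fin n → Bool} (he : e ∈ halfLayer n i p) (hw : w ∈ e) :
    e = s(w, flipCoord w i) ∧ wt w = p + bval (w i) := by
  obtain ⟨b, hb0, hbp, rfl⟩ := he
  rw [Sym2.mem_iff] at hw
  rcases hw with rfl | rfl
  · exact ⟨rfl, by simp [bval, hb0, hbp]⟩
  · have hwi : (flipCoord b i) i = true := by simp [hb0]
    constructor
    · rw [flipCoord_flip_flip, Sym2.eq_swap]
    · rw [wt_flip, hbp]
      simp [bval, hb0]

lemma mem_halfLayer_self {n : ℕ} {i : Fin n} {p : ZMod 2} {w : Fin n → Bool}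
    (h : wt w = p + bval (w i)) : s(w, flipCoord w i) ∈ halfLayer n i p := by
  rcases Bool.eq_false_or_eq_true (w i) with hwi | hwi
  · refine ⟨flipCoord w i, by simp [hwi], ?_, by rw [flipCoord_flip_flip, Sym2.eq_swap]⟩
    rw [wt_flip, h]
    simp [bval, hwi, zmod2_add]
  · exact ⟨w, hwi, by simpa [bval, hwi] using h, rfl⟩

lemma coveredBy_halfLayer {n : ℕ} {i : Fin n} {p : ZMod 2} {w : Fin n → Bool} :
    coveredBy (halfLayer n i p) w ↔ wt w = p + bval (w i) := by
  constructor
  · rintro ⟨e, he, hwe⟩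
    exact (edge_mem_halfLayer he hwe).2
  · intro h
    exact ⟨s(w, flipCoord w i), mem_halfLayer_self h, by simp⟩

lemma flip_edge_inj {n : ℕ} {w w' : Fin n → Bool} {i i' : Fin n}
    (hw : w i = false) (hw' : w' i' = false)
    (h : s(w, flipCoord w i) = s(w', flipCoord w' i')) : w = w' ∧ i = i' := by
  rw [Sym2.eq_iff] at h
  rcases h with ⟨h1, h2⟩ | ⟨h1, h2⟩
  · subst h1
    refine ⟨rfl, ?_⟩
    by_contra hne
    have := congrFun h2 i
    rw [flip_same, flip_other _ hne, hw] at this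
    simp at this
  · exfalso
    by_cases hii : i' = i
    · subst hii
      have := congrFun h1 i'
      rw [flip_same, hw'] at this
      rw [this] at hw
      simp at hw
    · have := congrFun h2 i'
      rw [flip_other _ hii] at this
      have h3 := congrFun h1 i'
      rw [flip_same, hw'] at h3
      rw [h3] at this
      rw [← this] at hw'
      simp at hw'

lemma halfLayer_param_unique {n : ℕ} {i i' : Fin n} {p p' : ZMod 2}
    {e : Sym2 (Fin n → Bool)} (h : e ∈ halfLayer n i p) (h' : e ∈ halfLayer n i' p') :
    i = i' ∧ p = p' := by
  obtain ⟨b, hb0, hbp, rfl⟩ := h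
  obtain ⟨b', hb0', hbp', he⟩ := h'
  obtain ⟨rfl, rfl⟩ := flip_edge_inj hb0 hb0' he
  exact ⟨rfl, hbp ▸ hbp'⟩

lemma exists_good {n : ℕ} (hn : 5 ≤ n) (i i' : Fin n) (hii : i ≠ i') (a b : Bool)
    (q : ZMod 2) (b₁ b₂ b₃ : Fin n → Bool) :
    ∃ w : Fin n → Bool, w i = a ∧ w i' = b ∧ wt w = q ∧ w ≠ b₁ ∧ w ≠ b₂ ∧ w ≠ b₃ := by
  -- find three fresh coordinates k, l, m
  have hcard : 3 ≤ (({i, i'} : Finset (Fin n))ᶜ).card := by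
    have h1 : (({i, i'} : Finset (Fin n))).card ≤ 2 := by
      apply le_trans (Finset.card_insert_le _ _)
      simp
    have h2 : (({i, i'} : Finset (Fin n))ᶜ).card
        = n - (({i, i'} : Finset (Fin n))).card := by
      rw [Finset.card_compl]
      simp
    omega
  obtain ⟨k, hk⟩ : ∃ k, k ∈ (({i, i'} : Finset (Fin n))ᶜ) :=
    Finset.card_pos.mp (by omega)
  obtain ⟨l, hl⟩ : ∃ l, l ∈ ((({i, i'} : Finset (Fin n))ᶜ).erase k) := by
    apply Finset.card_pos.mp
    rw [Finset.card_erase_of_mem hk]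
    omega
  obtain ⟨m, hm⟩ : ∃ m, m ∈ (((({i, i'} : Finset (Fin n))ᶜ).erase k).erase l) := by
    apply Finset.card_pos.mp
    rw [Finset.card_erase_of_mem hl, Finset.card_erase_of_mem hk]
    omega
  simp only [Finset.mem_erase, Finset.mem_compl, Finset.mem_insert,
    Finset.mem_singleton, not_or] at hk hl hm
  obtain ⟨hki, hki'⟩ := hk
  obtain ⟨hlk, hli, hli'⟩ := hl
  obtain ⟨hml, hmk, hmi, hmi'⟩ := hm
  -- base point with prescribed coordinates
  set z₀ : Fin n → Bool := fun j => if j = i then a else if j = i' then b else false with hz₀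
  set z : Fin n → Bool := if wt z₀ = q then z₀ else flipCoord z₀ k with hz
  have hz₀i : z₀ i = a := by simp [hz₀]
  have hz₀i' : z₀ i' = b := by simp [hz₀, Ne.symm hii]
  have hzi : z i = a := by
    rw [hz]; split
    · exact hz₀i
    · rw [flip_other _ (Ne.symm hki)]; exact hz₀i
  have hzi' : z i' = b := by
    rw [hz]; split
    · exact hz₀i'
    · rw [flip_other _ (Ne.symm hki')]; exact hz₀i'
  have hzq : wt z = q := by
    rw [hz]; split
    · assumption
    · rw [wt_flip]
      rcases (zmod2_ne (wt z₀) q).mp (by assumption) with h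
      rw [h, zmod2_add]
  -- the four candidates
  set w₁ : Fin n → Bool := z with hw₁
  set w₂ : Fin n → Bool := flipCoord (flipCoord z k) l with hw₂
  set w₃ : Fin n → Bool := flipCoord (flipCoord z k) m with hw₃
  set w₄ : Fin n → Bool := flipCoord (flipCoord z l) m with hw₄
  have hcand : ∀ w ∈ [w₁, w₂, w₃, w₄], w i = a ∧ w i' = b ∧ wt w = q := by
    intro w hw
    simp only [List.mem_cons, List.mem_singleton, List.not_mem_nil, or_false] at hw
    rcases hw with rfl | rfl | rfl | rfl
    · exact ⟨hzi, hzi', hzq⟩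
    · exact ⟨by rw [hw₂, flip_other _ (Ne.symm hli), flip_other _ (Ne.symm hki)]; exact hzi,
        by rw [hw₂, flip_other _ (Ne.symm hli'), flip_other _ (Ne.symm hki')]; exact hzi',
        by rw [hw₂, wt_flip, wt_flip, hzq, zmod2_add]⟩
    · exact ⟨by rw [hw₃, flip_other _ (Ne.symm hmi), flip_other _ (Ne.symm hki)]; exact hzi,
        by rw [hw₃, flip_other _ (Ne.symm hmi'), flip_other _ (Ne.symm hki')]; exact hzi',
        by rw [hw₃, wt_flip, wt_flip, hzq, zmod2_add]⟩
    · exact ⟨by rw [hw₄, flip_other _ (Ne.symm hmi), flip_other _ (Ne.symm hli)]; exact hzi,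
        by rw [hw₄, flip_other _ (Ne.symm hmi'), flip_other _ (Ne.symm hli')]; exact hzi',
        by rw [hw₄, wt_flip, wt_flip, hzq, zmod2_add]⟩
  -- coordinates at k and l of the candidates
  have hk₁ : w₁ k = z k := rfl
  have hk₂ : w₂ k = !z k := by
    rw [hw₂, flip_other _ (Ne.symm hlk), flip_same]
  have hk₃ : w₃ k = !z k := by
    rw [hw₃, flip_other _ (Ne.symm hmk), flip_same]
  have hk₄ : w₄ k = z k := by
    rw [hw₄, flip_other _ (Ne.symm hmk), flip_other _ (Ne.symm hlk)]
  have hl₁ : w₁ l = z l := rfl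
  have hl₂ : w₂ l = !z l := by rw [hw₂, flip_same, flip_other _ hlk]
  have hl₃ : w₃ l = z l := by
    rw [hw₃, flip_other _ (Ne.symm hml), flip_other _ hlk]
  have hl₄ : w₄ l = !z l := by
    rw [hw₄, flip_other _ (Ne.symm hml), flip_same]
  have bne : ∀ c : Bool, c ≠ !c := by decide
  have hdiff : ∀ (x y : Fin n → Bool) (j : Fin n) (c : Bool),
      x j = c → y j = !c → x ≠ y := by
    intro x y j c hx hy h
    rw [h, hy] at hx
    exact bne c hx.symm
  have hne : ({w₁, w₂, w₃, w₄} : Finset (Fin n → Bool)).card = 4 := by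
    have h12 : w₁ ≠ w₂ := hdiff _ _ k (z k) hk₁ hk₂
    have h13 : w₁ ≠ w₃ := hdiff _ _ k (z k) hk₁ hk₃
    have h14 : w₁ ≠ w₄ := hdiff _ _ l (z l) hl₁ hl₄
    have h23 : w₂ ≠ w₃ := (hdiff _ _ l (z l) hl₃ hl₂).symm
    have h24 : w₂ ≠ w₄ := (hdiff _ _ k (z k) hk₄ hk₂).symm
    have h34 : w₃ ≠ w₄ := (hdiff _ _ k (z k) hk₄ hk₃).symm
    rw [Finset.card_insert_of_notMem (by simp [h12, h13, h14]),
      Finset.card_insert_of_notMem (by simp [h23, h24]),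
      Finset.card_insert_of_notMem (by simp [h34]), Finset.card_singleton]
  by_contra hcon
  push_neg at hcon
  have hsub : ({w₁, w₂, w₃, w₄} : Finset (Fin n → Bool)) ⊆ {b₁, b₂, b₃} := by
    intro x hx
    simp only [Finset.mem_insert, Finset.mem_singleton] at hx ⊢
    have hx' : x i = a ∧ x i' = b ∧ wt x = q := by
      apply hcand
      rcases hx with rfl | rfl | rfl | rfl <;> simp
    by_contra hb
    push_neg at hb
    exact hb.2.2 (hcon x hx'.1 hx'.2.1 hx'.2.2 hb.1 hb.2.1)
  have hle := Finset.card_le_card hsub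
  rw [hne] at hle
  have : ({b₁, b₂, b₃} : Finset (Fin n → Bool)).card ≤ 3 := by
    apply le_trans (Finset.card_insert_le _ _)
    have := Finset.card_insert_le b₂ ({b₃} : Finset (Fin n → Bool))
    simp at this ⊢
    omega
  omega

def almostCond {n : ℕ} (M : Set (Sym2 (Fin n → Bool))) (u : Fin n → Bool) (i : Fin n) : Prop :=
  ∃ (p : ZMod 2) (e₀ : Sym2 (Fin n → Bool)), e₀ ∈ halfLayer n i p ∧ u ∈ e₀ ∧
    halfLayer n i p \ {e₀} ⊆ M

lemma flip_coord_ne {n : ℕ} {w : Fin n → Bool} {i j : Fin n} (h : i ≠ j) :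
    flipCoord w i ≠ flipCoord w j := by
  intro he
  have := congrFun he i
  rw [flip_same, flip_other _ h] at this
  exact (by decide : ∀ c : Bool, ¬ ((!c) = c)) _ this

lemma almost_unique {n : ℕ} (hn : 5 ≤ n) {M : Set (Sym2 (Fin n → Bool))}
    (hM : IsMatchingOn (Qc n) M) {u : Fin n → Bool} {i₁ i₂ : Fin n}
    (h₁ : almostCond M u i₁) (h₂ : almostCond M u i₂) : i₁ = i₂ := by
  by_contra hne
  obtain ⟨p₁, e₁, he₁, hue₁, hsub₁⟩ := h₁
  obtain ⟨p₂, e₂, he₂, hue₂, hsub₂⟩ := h₂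
  obtain ⟨he₁eq, hwt₁⟩ := edge_mem_halfLayer he₁ hue₁
  obtain ⟨he₂eq, hwt₂⟩ := edge_mem_halfLayer he₂ hue₂
  obtain ⟨w, hwi₁, hwi₂, hwq, hwu, hwf₁, hwf₂⟩ :=
    exists_good hn i₁ i₂ hne (u i₁) (u i₂) (wt u) u (flipCoord u i₁) (flipCoord u i₂)
  have hf₁ : s(w, flipCoord w i₁) ∈ halfLayer n i₁ p₁ :=
    mem_halfLayer_self (by rw [hwq, hwi₁]; exact hwt₁)
  have hf₂ : s(w, flipCoord w i₂) ∈ halfLayer n i₂ p₂ :=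
    mem_halfLayer_self (by rw [hwq, hwi₂]; exact hwt₂)
  have hf₁M : s(w, flipCoord w i₁) ∈ M := by
    apply hsub₁
    refine ⟨hf₁, ?_⟩
    simp only [Set.mem_singleton_iff]
    intro heq
    have hwmem : w ∈ e₁ := by rw [← heq]; simp
    rw [he₁eq, Sym2.mem_iff] at hwmem
    rcases hwmem with rfl | rfl
    · exact hwu rfl
    · exact hwf₁ rfl
  have hf₂M : s(w, flipCoord w i₂) ∈ M := by
    apply hsub₂
    refine ⟨hf₂, ?_⟩
    simp only [Set.mem_singleton_iff]
    intro heq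
    have hwmem : w ∈ e₂ := by rw [← heq]; simp
    rw [he₂eq, Sym2.mem_iff] at hwmem
    rcases hwmem with rfl | rfl
    · exact hwu rfl
    · exact hwf₂ rfl
  have hne' : s(w, flipCoord w i₁) ≠ s(w, flipCoord w i₂) := by
    rw [ne_eq, Sym2.eq_iff]
    push_neg
    constructor
    · intro _
      exact flip_coord_ne hne
    · intro hwflip _
      exact flip_ne w i₂ hwflip.symm
  exact hM.2 _ hf₁M _ hf₂M hne' w (by simp) (by simp)

lemma parity_of_ham {n : ℕ} (hn : 1 ≤ n) {M : Set (Sym2 (Fin n → Bool))}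
    {u v : Fin n → Bool} (h : ExtendsHamPath (Qc n) M u v) : wt v = wt u + 1 := by
  obtain ⟨p, hham, _⟩ := h
  have hlen := hham.length_eq
  have hcast : ((Fintype.card (Fin n → Bool) - 1 : ℕ) : ZMod 2) = 1 := by
    rw [Fintype.card_fun, Fintype.card_bool, Fintype.card_fin]
    obtain ⟨m, rfl⟩ : ∃ m, n = m + 1 := ⟨n - 1, (Nat.sub_add_cancel hn).symm⟩
    have h1 : (1 : ℕ) ≤ 2 ^ m := Nat.one_le_two_pow
    have he : 2 ^ (m + 1) - 1 = 2 * (2 ^ m - 1) + 1 := by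
      have : 2 ^ (m + 1) = 2 * 2 ^ m := by ring
      omega
    rw [he]
    push_cast
    have h2 : (2 : ZMod 2) = 0 := rfl
    rw [h2]
    ring
  rw [walk_wt p, hlen, hcast]

lemma zmod2_succ_ne : ∀ a : ZMod 2, a + 1 ≠ a := by decide

lemma T_eq_noneC {n : ℕ} (hn : 5 ≤ n) {M : Set (Sym2 (Fin n → Bool))}
    (hM : IsMatchingOn (Qc n) M) (u : Fin n → Bool) (hB : ConjB n) :
    {v | ExtendsHamPath (Qc n) M u v} = {v | wt v = wt u + 1 ∧ NoneC M u v} := by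
  ext v
  simp only [Set.mem_setOf_eq]
  constructor
  · intro h
    have hp := parity_of_ham (by omega) h
    exact ⟨hp, (hB M hM u v (by rw [hp]; exact (zmod2_succ_ne (wt u)).symm)).mp h⟩
  · rintro ⟨hp, hnc⟩
    exact (hB M hM u v (by rw [hp]; exact (zmod2_succ_ne (wt u)).symm)).mpr hnc

lemma caseA_descr {n : ℕ} (hn : 5 ≤ n) {M : Set (Sym2 (Fin n → Bool))}
    (hM : IsMatchingOn (Qc n) M) {u : Fin n → Bool} {i : Fin n} {p : ZMod 2}
    (hsub : halfLayer n i p ⊆ M) (hcov : coveredBy (halfLayer n i p) u)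
    {v : Fin n → Bool} :
    NoneC M u v ↔ ¬ coveredBy (halfLayer n i p) v := by
  obtain ⟨e, heH, hue⟩ := hcov
  obtain ⟨heq, hwtu⟩ := edge_mem_halfLayer heH hue
  have heM := hsub heH
  constructor
  · intro hnc hcv
    exact hnc.1 ⟨i, p, hsub, ⟨e, heH, hue⟩, hcv⟩
  · intro hcv
    refine ⟨?_, ?_, ?_⟩
    · rintro ⟨i', p', hsub', ⟨e', he', hue'⟩, hcv'⟩
      have hee : e' = e := matching_unique hM (hsub' he') heM hue' hue
      rw [hee] at he'
      obtain ⟨rfl, rfl⟩ := halfLayer_param_unique he' heH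
      exact hcv hcv'
    · rintro ⟨i'', hveq, halm, j, hji, hjM, hjM'⟩
      have hia : almostCond M u i := ⟨p, e, heH, hue, fun x hx => hsub hx.1⟩
      have hii : i'' = i := almost_unique hn hM halm hia
      subst hii
      exact hcv ⟨e, heH, by rw [heq, hveq]; simp⟩
    · intro hc3
      have hee : s(u, v) = e := matching_unique hM hc3 heM (by simp) hue
      exact hcv ⟨e, heH, by rw [← hee]; simp⟩

lemma bval_iff : ∀ x y : Bool, (bval x + 1 = bval y) ↔ y = !x := by decide

lemma bool_ne_not : ∀ x y : Bool, ¬ (x = !y) ↔ x = y := by decide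

lemma caseA_set {n : ℕ} (hn : 5 ≤ n) {M : Set (Sym2 (Fin n → Bool))}
    (hM : IsMatchingOn (Qc n) M) {u : Fin n → Bool} {i : Fin n} {p : ZMod 2}
    (hsub : halfLayer n i p ⊆ M) (hcov : coveredBy (halfLayer n i p) u) (hB : ConjB n) :
    {v | ExtendsHamPath (Qc n) M u v}
      = {v | wt v ≠ wt u ∧ ¬ coveredBy (halfLayer n i p) v} := by
  rw [T_eq_noneC hn hM u hB]
  ext v
  simp only [Set.mem_setOf_eq]
  constructor
  · rintro ⟨hp, hnc⟩
    exact ⟨by rw [hp]; exact zmod2_succ_ne (wt u),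
      (caseA_descr hn hM hsub hcov).mp hnc⟩
  · rintro ⟨hp, hnc⟩
    exact ⟨(zmod2_ne (wt v) (wt u)).mp hp, (caseA_descr hn hM hsub hcov).mpr hnc⟩

lemma ncard_setOf {n : ℕ} (P : (Fin n → Bool) → Prop) [DecidablePred P] :
    {v : Fin n → Bool | P v}.ncard = (Finset.univ.filter P).card := by
  rw [Set.ncard_eq_toFinset_card']
  congr 1
  ext v
  simp

lemma caseA_count {n : ℕ} (hn : 5 ≤ n) {M : Set (Sym2 (Fin n → Bool))}
    (hM : IsMatchingOn (Qc n) M) {u : Fin n → Bool} {i : Fin n} {p : ZMod 2}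
    (hsub : halfLayer n i p ⊆ M) (hcov : coveredBy (halfLayer n i p) u) (hB : ConjB n) :
    {v | ExtendsHamPath (Qc n) M u v}.ncard = 2 ^ (n - 2) := by
  classical
  rw [caseA_set hn hM hsub hcov hB]
  obtain ⟨e, heH, hue⟩ := hcov
  obtain ⟨heq, hwtu⟩ := edge_mem_halfLayer heH hue
  have hdescr : {v : Fin n → Bool | wt v ≠ wt u ∧ ¬ coveredBy (halfLayer n i p) v}
      = {v : Fin n → Bool | v i = u i ∧ wt v = wt u + 1} := by
    ext v
    simp only [Set.mem_setOf_eq]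
    constructor
    · rintro ⟨hp, hnc⟩
      have hp' := (zmod2_ne (wt v) (wt u)).mp hp
      refine ⟨?_, hp'⟩
      rw [coveredBy_halfLayer] at hnc
      apply (bool_ne_not (v i) (u i)).mp
      intro hvi
      apply hnc
      rw [hp', hwtu, add_assoc, (bval_iff (u i) (v i)).mpr hvi]
    · rintro ⟨hvi, hp⟩
      refine ⟨by rw [hp]; exact zmod2_succ_ne (wt u), ?_⟩
      rw [coveredBy_halfLayer, hp, hwtu, hvi, add_assoc, ← add_assoc]
      exact zmod2_succ_ne (p + bval (u i))
  rw [hdescr, ncard_setOf]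
  exact card_coord_parity (by omega) i (u i) (wt u + 1)

lemma caseB {n : ℕ} (hn : 5 ≤ n) {M : Set (Sym2 (Fin n → Bool))}
    (hM : IsMatchingOn (Qc n) M) (u : Fin n → Bool) (hB : ConjB n)
    (hno : ¬ ∃ (i : Fin n) (p : ZMod 2), halfLayer n i p ⊆ M ∧ coveredBy (halfLayer n i p) u) :
    2 ^ (n - 1) - 2 ≤ {v | ExtendsHamPath (Qc n) M u v}.ncard := by
  classical
  rw [T_eq_noneC hn hM u hB]
  set x : Fin n → Bool := if h : ∃ x, s(u, x) ∈ M then h.choose else u with hx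
  set y : Fin n → Bool :=
    if h : ∃ i'', almostCond M u i'' then flipCoord u h.choose else u with hy
  have hsubset : {v : Fin n → Bool | wt v = wt u + 1} \ {x, y}
      ⊆ {v | wt v = wt u + 1 ∧ NoneC M u v} := by
    rintro v ⟨hvO, hvxy⟩
    simp only [Set.mem_insert_iff, Set.mem_singleton_iff, not_or] at hvxy
    obtain ⟨hvx, hvy⟩ := hvxy
    refine ⟨hvO, ?_, ?_, ?_⟩
    · rintro ⟨i, p, hsub, hcovu, _⟩
      exact hno ⟨i, p, hsub, hcovu⟩
    · rintro ⟨i'', hveq, halm, _⟩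
      have hex2 : ∃ i'', almostCond M u i'' := ⟨i'', halm⟩
      apply hvy
      rw [hy, dif_pos hex2, hveq, almost_unique hn hM halm hex2.choose_spec]
    · intro hc3
      have hex3 : ∃ w, s(u, w) ∈ M := ⟨v, hc3⟩
      apply hvx
      rw [hx, dif_pos hex3]
      have heq := matching_unique hM hc3 hex3.choose_spec
        (Sym2.mem_mk_left u v) (Sym2.mem_mk_left u _)
      rw [Sym2.eq_iff] at heq
      rcases heq with ⟨_, h2⟩ | ⟨h1, h2⟩
      · exact h2
      · exact h2.trans h1
  have hO : {v : Fin n → Bool | wt v = wt u + 1}.ncard = 2 ^ (n - 1) := by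
    rw [ncard_setOf]
    exact card_parity (by omega) _
  have hle1 : {v : Fin n → Bool | wt v = wt u + 1}.ncard
      ≤ ({v : Fin n → Bool | wt v = wt u + 1} \ {x, y}).ncard + 2 := by
    have hsub2 : {v : Fin n → Bool | wt v = wt u + 1}
        ⊆ ({v : Fin n → Bool | wt v = wt u + 1} \ {x, y}) ∪ {x, y} := by
      intro v hv
      by_cases hmem : v ∈ ({x, y} : Set (Fin n → Bool))
      · exact Or.inr hmem
      · exact Or.inl ⟨hv, hmem⟩
    calc {v : Fin n → Bool | wt v = wt u + 1}.ncard
        ≤ (({v : Fin n → Bool | wt v = wt u + 1} \ {x, y}) ∪ {x, y}).ncard :=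
          Set.ncard_le_ncard hsub2 (Set.toFinite _)
      _ ≤ ({v : Fin n → Bool | wt v = wt u + 1} \ {x, y}).ncard
          + ({x, y} : Set (Fin n → Bool)).ncard := Set.ncard_union_le _ _
      _ ≤ ({v : Fin n → Bool | wt v = wt u + 1} \ {x, y}).ncard + 2 := by
          have := Set.ncard_insert_le x ({y} : Set (Fin n → Bool))
          have h1 : ({y} : Set (Fin n → Bool)).ncard = 1 := Set.ncard_singleton y
          omega
  have hle2 : ({v : Fin n → Bool | wt v = wt u + 1} \ {x, y}).ncard
      ≤ {v : Fin n → Bool | wt v = wt u + 1 ∧ NoneC M u v}.ncard :=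
    Set.ncard_le_ncard hsubset (Set.toFinite _)
  omega

/-- For `n ≥ 5`, a matching `M` of `Q_n` and a vertex `u`, assuming Conjecture B for
dimension `n`: `|T^M_u| ≥ 2^{n-2}`; equality holds iff `M` contains a half-layer covering
`u`, in which case `T^M_u` consists exactly of the vertices of parity opposite to `u` not
covered by that half-layer; otherwise `|T^M_u| ≥ 2^{n-1} - 2`. -/
theorem stmt6 (n : ℕ) (hn : 5 ≤ n) (M : Set (Sym2 (Fin n → Bool)))
    (hM : IsMatchingOn (Qc n) M) (u : Fin n → Bool) (hB : ConjB n) :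
    2 ^ (n - 2) ≤ {v | ExtendsHamPath (Qc n) M u v}.ncard ∧
    ({v | ExtendsHamPath (Qc n) M u v}.ncard = 2 ^ (n - 2) ↔
      ∃ (i : Fin n) (p : ZMod 2), halfLayer n i p ⊆ M ∧ coveredBy (halfLayer n i p) u) ∧
    (∀ (i : Fin n) (p : ZMod 2), halfLayer n i p ⊆ M → coveredBy (halfLayer n i p) u →
      {v | ExtendsHamPath (Qc n) M u v}
        = {v | wt v ≠ wt u ∧ ¬ coveredBy (halfLayer n i p) v}) ∧
    ((¬ ∃ (i : Fin n) (p : ZMod 2), halfLayer n i p ⊆ M ∧ coveredBy (halfLayer n i p) u) →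
      2 ^ (n - 1) - 2 ≤ {v | ExtendsHamPath (Qc n) M u v}.ncard) := by
  classical
  have h8 : 8 ≤ 2 ^ (n - 2) := by
    calc (8 : ℕ) = 2 ^ 3 := by norm_num
      _ ≤ 2 ^ (n - 2) := Nat.pow_le_pow_right (by norm_num) (by omega)
  have hp2 : 2 ^ (n - 1) = 2 * 2 ^ (n - 2) := by
    rw [← pow_succ']
    congr 1
    omega
  by_cases hex : ∃ (i : Fin n) (p : ZMod 2), halfLayer n i p ⊆ M ∧ coveredBy (halfLayer n i p) u
  · obtain ⟨i, p, hsub, hcov⟩ := hex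
    have hc := caseA_count hn hM hsub hcov hB
    refine ⟨le_of_eq hc.symm, ⟨fun _ => ⟨i, p, hsub, hcov⟩, fun _ => hc⟩, ?_, ?_⟩
    · intro i' p' hsub' hcov'
      exact caseA_set hn hM hsub' hcov' hB
    · intro hno
      exact absurd ⟨i, p, hsub, hcov⟩ hno
  · have hb := caseB hn hM u hB hex
    set N := {v | ExtendsHamPath (Qc n) M u v}.ncard with hN
    clear_value N
    refine ⟨by omega, ⟨fun hc => by omega, fun he => absurd he hex⟩, ?_, fun _ => hb⟩
    intro i p hsub hcov
    exact absurd ⟨i, p, hsub, hcov⟩ hex
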